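/- arXiv:1210.5632 — 5 statements merged into one kernel-verified Lean document; each statement's English description precedes it below -/
import Mathlib

section
/- The polynomials δ₁δ₂δ₁(y⁴) and δ₂δ₁δ₂(y⁴) are linearly independent over ℂ; in particular there is no scalar λ ∈ ℂ with δ₁δ₂δ₁ = λ·δ₂δ₁δ₂, so the Demazure operators associated to the braid diagram of the complex reflection group G₄ do not satisfy the braid relation, even up to a scalar. Explicitly, 3·δ₁δ₂δ₁(y⁴) = (5j² − 2j)·x + (10j + 8j²)·y and 9·δ₂δ₁δ₂(y⁴) = (4j − 13j²)·x + (2j² − 2j)·y. -/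
noncomputable section

open MvPolynomial

/-- j = exp(2πi/3). -/
def j : ℂ := Complex.exp (2 * Real.pi * Complex.I / 3)

/-- The action of the generator s₁ = diag(1, j) of G₄ on ℂ[x,y] (x = X 0, y = X 1). -/
def σ₁ : MvPolynomial (Fin 2) ℂ →ₐ[ℂ] MvPolynomial (Fin 2) ℂ :=
  aeval ![X 0, C j * X 1]

/-- The action of the generator s₂ = (1/3)[[j−j², 2j+j²],[4j+2j², −j−2j²]] of G₄ on ℂ[x,y]:
x ↦ ((j−j²)x + (4j+2j²)y)/3, y ↦ ((2j+j²)x + (−j−2j²)y)/3. -/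
def σ₂ : MvPolynomial (Fin 2) ℂ →ₐ[ℂ] MvPolynomial (Fin 2) ℂ :=
  aeval ![C ((j - j^2)/3) * X 0 + C ((4*j + 2*j^2)/3) * X 1,
          C ((2*j + j^2)/3) * X 0 + C ((-j - 2*j^2)/3) * X 1]

lemma hj_rel : j^2 + j + 1 = 0 := by
  have hp : IsPrimitiveRoot j 3 := by
    have := Complex.isPrimitiveRoot_exp 3 (by norm_num)
    simpa [j] using this
  have h3 : j^3 = 1 := hp.pow_eq_one
  have h1 : j ≠ 1 := hp.ne_one (by norm_num)
  have : (j - 1) * (j^2 + j + 1) = 0 := by linear_combination h3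
  rcases mul_eq_zero.mp this with h | h
  · exact absurd (sub_eq_zero.mp h) h1
  · exact h

lemma hXY_ne : (X 0 + X 1 : MvPolynomial (Fin 2) ℂ) ≠ 0 := by
  intro h
  have := congrArg (eval ![(1:ℂ), 0]) h
  simp at this

-- abbreviations for the intermediate polynomials
private def q2p : MvPolynomial (Fin 2) ℂ :=
  C ((-1 - j)/3) * X 0^2 + C ((1 + 4*j)/3) * X 0 * X 1 + C ((2 - 4*j)/3) * X 1^2
private def q3p : MvPolynomial (Fin 2) ℂ :=
  C ((-5 - 7*j)/3) * X 0 + C ((-8 + 2*j)/3) * X 1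
private def r1p : MvPolynomial (Fin 2) ℂ :=
  C ((-1 - j)/9) * X 0^3 + C ((1 + 5*j)/9) * X 0^2 * X 1
    + C ((5 - 5*j)/9) * X 0 * X 1^2 + C ((-9 + j)/9) * X 1^3
private def r2p : MvPolynomial (Fin 2) ℂ :=
  C ((-2 - 3*j)/3) * X 0^2 + C ((-5 : ℂ)/3) * X 0 * X 1
private def r3p : MvPolynomial (Fin 2) ℂ :=
  C ((13 + 17*j)/9) * X 0 + C ((-2 - 4*j)/9) * X 1

section steps
variable (δ₁ δ₂ : MvPolynomial (Fin 2) ℂ →ₗ[ℂ] MvPolynomial (Fin 2) ℂ)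
  (h₁ : ∀ p, σ₁ p - p = X 1 * δ₁ p)
  (h₂ : ∀ p, σ₂ p - p = (X 0 + X 1) * δ₂ p)

include h₁ in
lemma stepq1 : δ₁ ((X 1 : MvPolynomial (Fin 2) ℂ)^4) = C (j - 1) * X 1 ^ 3 := by
  apply mul_left_cancel₀ (X_ne_zero (R := ℂ) 1)
  rw [← h₁]
  simp only [σ₁, map_pow, aeval_X, Matrix.cons_val_one, Matrix.head_cons, Matrix.cons_val_zero]
  apply MvPolynomial.funext
  intro v
  simp only [map_sub, map_mul, map_pow, eval_X, eval_C]
  linear_combination ((-1:ℂ) * j * (v 1)^4 + (1:ℂ) * j^2 * (v 1)^4) * hj_rel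

include h₂ in
lemma stepq2 : δ₂ (C (j - 1) * X 1 ^ 3) = q2p := by
  apply mul_left_cancel₀ hXY_ne
  rw [← h₂]
  simp only [σ₂, map_mul, map_pow, aeval_X, aeval_C, Matrix.cons_val_one, Matrix.head_cons,
    Matrix.cons_val_zero, q2p]
  apply MvPolynomial.funext
  intro v
  simp only [map_sub, map_add, map_mul, map_pow, eval_X, eval_C, algebraMap_eq]
  linear_combination (((1:ℂ)/3) * (v 1)^3 + (-1:ℂ) * v 0 * (v 1)^2 + ((1:ℂ)/3) * (v 0)^3 + (1:ℂ) * j * v 0 * (v 1)^2 + (-1:ℂ) * j * (v 0)^2 * v 1 + ((-1:ℂ)/3) * j^2 * (v 1)^3 + (1:ℂ) * j^2 * (v 0)^2 * v 1 + ((-1:ℂ)/3) * j^2 * (v 0)^3 + ((10:ℂ)/27) * j^3 * (v 1)^3 + ((-11:ℂ)/9) * j^3 * v 0 * (v 1)^2 + ((4:ℂ)/9) * j^3 * (v 0)^2 * v 1 + ((1:ℂ)/27) * j^3 * (v 0)^3 + ((4:ℂ)/27) * j^4 * (v 1)^3 + ((4:ℂ)/9) * j^4 * v 0 * (v 1)^2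 + ((-5:ℂ)/9) * j^4 * (v 0)^2 * v 1 + ((4:ℂ)/27) * j^4 * (v 0)^3 + ((-8:ℂ)/27) * j^5 * (v 1)^3 + ((4:ℂ)/9) * j^5 * v 0 * (v 1)^2 + ((-2:ℂ)/9) * j^5 * (v 0)^2 * v 1 + ((1:ℂ)/27) * j^5 * (v 0)^3) * hj_rel

include h₁ in
lemma stepq3 : δ₁ q2p = q3p := by
  apply mul_left_cancel₀ (X_ne_zero (R := ℂ) 1)
  rw [← h₁]
  simp only [σ₁, q2p, q3p, map_add, map_mul, map_pow, aeval_X, aeval_C,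
    Matrix.cons_val_one, Matrix.head_cons, Matrix.cons_val_zero]
  apply MvPolynomial.funext
  intro v
  simp only [map_sub, map_add, map_mul, map_pow, eval_X, eval_C, algebraMap_eq]
  linear_combination ((2:ℂ) * (v 1)^2 + ((4:ℂ)/3) * v 0 * v 1 + ((-4:ℂ)/3) * j * (v 1)^2) * hj_rel

include h₂ in
lemma stepr1 : δ₂ ((X 1 : MvPolynomial (Fin 2) ℂ)^4) = r1p := by
  apply mul_left_cancel₀ hXY_ne
  rw [← h₂]
  simp only [σ₂, r1p, map_add, map_mul, map_pow, aeval_X, aeval_C,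
    Matrix.cons_val_one, Matrix.head_cons, Matrix.cons_val_zero]
  apply MvPolynomial.funext
  intro v
  simp only [map_sub, map_add, map_mul, map_pow, eval_X, eval_C, algebraMap_eq]
  linear_combination (((4:ℂ)/9) * v 0 * (v 1)^3 + ((-2:ℂ)/3) * (v 0)^2 * (v 1)^2 + ((1:ℂ)/9) * (v 0)^4 + ((-1:ℂ)/9) * j * (v 1)^4 + ((2:ℂ)/3) * j * (v 0)^2 * (v 1)^2 + ((-4:ℂ)/9) * j * (v 0)^3 * v 1 + ((1:ℂ)/9) * j^2 * (v 1)^4 + ((-4:ℂ)/9) * j^2 * v 0 * (v 1)^3 + ((4:ℂ)/9) * j^2 * (v 0)^3 * v 1 + ((-1:ℂ)/9) * j^2 * (v 0)^4 + ((4:ℂ)/9) * j^3 * v 0 * (v 1)^3 + ((-2:ℂ)/3) * j^3 * (v 0)^2 * (v 1)^2 + ((1:ℂ)/9) * j^3 * (v 0)^4 + ((-8:ℂ)/81) * j^4 * (v 1)^4 + ((-8:ℂ)/81) * j^4 * v 0 * (v 1)^3 + ((26:ℂ)/27) * j^4 * (v 0)^2 * (v 1)^2 + ((-68:ℂ)/81)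 * j^4 * (v 0)^3 * v 1 + ((16:ℂ)/81) * j^4 * (v 0)^4 + ((16:ℂ)/81) * j^5 * (v 1)^4 + ((-80:ℂ)/81) * j^5 * v 0 * (v 1)^3 + ((32:ℂ)/27) * j^5 * (v 0)^2 * (v 1)^2 + ((-44:ℂ)/81) * j^5 * (v 0)^3 * v 1 + ((7:ℂ)/81) * j^5 * (v 0)^4 + ((16:ℂ)/81) * j^6 * (v 1)^4 + ((-32:ℂ)/81) * j^6 * v 0 * (v 1)^3 + ((8:ℂ)/27) * j^6 * (v 0)^2 * (v 1)^2 + ((-8:ℂ)/81) * j^6 * (v 0)^3 * v 1 + ((1:ℂ)/81) * j^6 * (v 0)^4) * hj_rel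

include h₁ in
lemma stepr2 : δ₁ r1p = r2p := by
  apply mul_left_cancel₀ (X_ne_zero (R := ℂ) 1)
  rw [← h₁]
  simp only [σ₁, r1p, r2p, map_add, map_mul, map_pow, aeval_X, aeval_C,
    Matrix.cons_val_one, Matrix.head_cons, Matrix.cons_val_zero]
  apply MvPolynomial.funext
  intro v
  simp only [map_sub, map_add, map_mul, map_pow, eval_X, eval_C, algebraMap_eq]
  linear_combination ((1:ℂ) * (v 1)^3 + ((10:ℂ)/9) * v 0 * (v 1)^2 + ((5:ℂ)/9) * (v 0)^2 * v 1 + ((-10:ℂ)/9) * j * (v 1)^3 + ((-5:ℂ)/9) * j * v 0 * (v 1)^2 + ((1:ℂ)/9) * j^2 * (v 1)^3) * hj_rel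

include h₂ in
lemma stepr3 : δ₂ r2p = r3p := by
  apply mul_left_cancel₀ hXY_ne
  rw [← h₂]
  simp only [σ₂, r2p, r3p, map_add, map_mul, map_pow, aeval_X, aeval_C,
    Matrix.cons_val_one, Matrix.head_cons, Matrix.cons_val_zero]
  apply MvPolynomial.funext
  intro v
  simp only [map_sub, map_add, map_mul, map_pow, eval_X, eval_C, algebraMap_eq]
  linear_combination (((2:ℂ)/9) * (v 1)^2 + ((4:ℂ)/9) * v 0 * v 1 + ((-7:ℂ)/9) * (v 0)^2 + ((2:ℂ)/9) * j * (v 1)^2 + ((-17:ℂ)/9) * j * v 0 * v 1 + ((-1:ℂ)/9) * j * (v 0)^2 + ((-8:ℂ)/9) * j^2 * (v 1)^2 + ((-4:ℂ)/9) * j^2 * v 0 * v 1 + ((4:ℂ)/9) * j^2 * (v 0)^2 + ((-4:ℂ)/9) * j^3 * (v 1)^2 + ((4:ℂ)/9) * j^3 * v 0 * v 1 + ((-1:ℂ)/9) * j^3 * (v 0)^2) * hj_rel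

end steps

lemma hdet_ne : (40 : ℂ) + 50 * j ≠ 0 := by
  intro h
  have hj5 : j = -4/5 := by linear_combination h / 50
  have := hj_rel
  rw [hj5] at this
  norm_num at this

/-- if δ₁, δ₂ are the Demazure operators of G₄, i.e. the (unique) ℂ-linear maps
with s₁·p − p = y·δ₁(p) and s₂·p − p = (x+y)·δ₂(p), then δ₁δ₂δ₁(y⁴) and δ₂δ₁δ₂(y⁴) are
linearly independent, hence δ₁δ₂δ₁ is not a scalar multiple of δ₂δ₁δ₂ (the braid relation fails
even up to a scalar); explicitly, 3·δ₁δ₂δ₁(y⁴) = (5j²−2j)x + (10j+8j²)y and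
9·δ₂δ₁δ₂(y⁴) = (4j−13j²)x + (2j²−2j)y. -/
theorem G4_demazure_braid_fails
    (δ₁ δ₂ : MvPolynomial (Fin 2) ℂ →ₗ[ℂ] MvPolynomial (Fin 2) ℂ)
    (h₁ : ∀ p, σ₁ p - p = X 1 * δ₁ p)
    (h₂ : ∀ p, σ₂ p - p = (X 0 + X 1) * δ₂ p) :
    LinearIndependent ℂ ![δ₁ (δ₂ (δ₁ ((X 1 : MvPolynomial (Fin 2) ℂ) ^ 4))),
        δ₂ (δ₁ (δ₂ ((X 1 : MvPolynomial (Fin 2) ℂ) ^ 4)))]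
    ∧ (∀ lam : ℂ, δ₁ ∘ₗ δ₂ ∘ₗ δ₁ ≠ lam • (δ₂ ∘ₗ δ₁ ∘ₗ δ₂))
    ∧ (3 : ℂ) • δ₁ (δ₂ (δ₁ ((X 1 : MvPolynomial (Fin 2) ℂ) ^ 4)))
        = C (5*j^2 - 2*j) * X 0 + C (10*j + 8*j^2) * X 1
    ∧ (9 : ℂ) • δ₂ (δ₁ (δ₂ ((X 1 : MvPolynomial (Fin 2) ℂ) ^ 4)))
        = C (4*j - 13*j^2) * X 0 + C (2*j^2 - 2*j) * X 1 := by
  have hq : δ₁ (δ₂ (δ₁ ((X 1 : MvPolynomial (Fin 2) ℂ) ^ 4))) = q3p := by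
    rw [stepq1 δ₁ h₁, stepq2 δ₂ h₂, stepq3 δ₁ h₁]
  have hr : δ₂ (δ₁ (δ₂ ((X 1 : MvPolynomial (Fin 2) ℂ) ^ 4))) = r3p := by
    rw [stepr1 δ₂ h₂, stepr2 δ₁ h₁, stepr3 δ₂ h₂]
  have li : LinearIndependent ℂ ![δ₁ (δ₂ (δ₁ ((X 1 : MvPolynomial (Fin 2) ℂ) ^ 4))),
      δ₂ (δ₁ (δ₂ ((X 1 : MvPolynomial (Fin 2) ℂ) ^ 4)))] := by
    rw [hq, hr, LinearIndependent.pair_iff]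
    intro s t hst
    have e1 : s * ((-5 - 7*j)/3) + t * ((13 + 17*j)/9) = 0 := by
      have := congrArg (eval ![(1:ℂ), 0]) hst
      simpa [q3p, r3p, smul_eq_C_mul] using this
    have e2 : s * ((-8 + 2*j)/3) + t * ((-2 - 4*j)/9) = 0 := by
      have := congrArg (eval ![(0:ℂ), 1]) hst
      simpa [q3p, r3p, smul_eq_C_mul] using this
    have hs : s * (40 + 50*j) = 0 := by
      linear_combination (-2 - 4*j) * e1 - (13 + 17*j) * e2 + 2*s*hj_rel
    have ht : t * (40 + 50*j) = 0 := by
      linear_combination (24 - 6*j) * e1 + (-15 - 21*j) * e2 + 2*t*hj_rel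
    exact ⟨by simpa [hdet_ne] using mul_eq_zero.mp hs,
           by simpa [hdet_ne] using mul_eq_zero.mp ht⟩
  refine ⟨li, ?_, ?_, ?_⟩
  · intro lam hl
    have happ := LinearMap.congr_fun hl ((X 1 : MvPolynomial (Fin 2) ℂ) ^ 4)
    simp only [LinearMap.comp_apply, LinearMap.smul_apply] at happ
    obtain ⟨h10, -⟩ := LinearIndependent.pair_iff.mp li 1 (-lam)
      (by rw [one_smul, happ, neg_smul, add_neg_cancel])
    exact one_ne_zero h10
  · rw [hq, q3p]
    apply MvPolynomial.funext
    intro v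
    simp only [smul_eq_C_mul, map_add, map_mul, map_pow, eval_X, eval_C]
    linear_combination ((-8:ℂ) * v 1 + (-5:ℂ) * v 0) * hj_rel
  · rw [hr, r3p]
    apply MvPolynomial.funext
    intro v
    simp only [smul_eq_C_mul, map_add, map_mul, map_pow, eval_X, eval_C]
    linear_combination ((-2:ℂ) * v 1 + (13:ℂ) * v 0) * hj_rel
end
end

section
/- Let m ∈ ℤ with m ≠ 1 and m ≠ −1. The unital associative ℤ-algebra presented by generators s₁, s₂ and relations s₁s₂s₁ = s₂s₁s₂, s₁³ = m, s₂³ = m (where m denotes m·1) is not finitely generated as a ℤ-module. -/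
noncomputable section

open Finsupp

variable (R : Type*) [CommRing R]

/-- shift operator with pattern {2,3} mod 4 -/
def Xop : (ℕ →₀ R) →ₗ[R] (ℕ →₀ R) :=
  Finsupp.lsum ℕ fun i => if 2 ≤ i % 4 then Finsupp.lsingle (i + 1) else 0

def Yop : (ℕ →₀ R) →ₗ[R] (ℕ →₀ R) :=
  Finsupp.lsum ℕ fun i => if i % 4 < 2 then Finsupp.lsingle (i + 1) else 0

lemma Xop_single (i : ℕ) (c : R) :
    Xop R (single i c) = if 2 ≤ i % 4 then single (i + 1) c else 0 := by
  simp [Xop]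
  split <;> simp

lemma Yop_single (i : ℕ) (c : R) :
    Yop R (single i c) = if i % 4 < 2 then single (i + 1) c else 0 := by
  simp [Yop]
  split <;> simp

lemma Xop_cube : (Xop R) ^ 3 = 0 := by
  rw [pow_succ, pow_succ, pow_one]
  apply Finsupp.lhom_ext
  intro i c
  simp only [Module.End.mul_apply, LinearMap.zero_apply, Xop_single]
  by_cases h1 : 2 ≤ i % 4
  · rw [if_pos h1, Xop_single]
    by_cases h2 : 2 ≤ (i + 1) % 4
    · rw [if_pos h2, Xop_single, if_neg (by omega)]
    · rw [if_neg h2, map_zero]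
  · rw [if_neg h1, map_zero, map_zero]

lemma Yop_cube : (Yop R) ^ 3 = 0 := by
  rw [pow_succ, pow_succ, pow_one]
  apply Finsupp.lhom_ext
  intro i c
  simp only [Module.End.mul_apply, LinearMap.zero_apply, Yop_single]
  by_cases h1 : i % 4 < 2
  · rw [if_pos h1, Yop_single]
    by_cases h2 : (i + 1) % 4 < 2
    · rw [if_pos h2, Yop_single, if_neg (by omega)]
    · rw [if_neg h2, map_zero]
  · rw [if_neg h1, map_zero, map_zero]

lemma braid_op : Xop R * Yop R * Xop R = Yop R * Xop R * Yop R := by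
  apply Finsupp.lhom_ext
  intro i c
  simp only [Module.End.mul_apply, Xop_single, Yop_single]
  by_cases h1 : 2 ≤ i % 4
  · rw [if_pos h1, if_neg (by omega : ¬ i % 4 < 2), map_zero, map_zero, Yop_single]
    by_cases h2 : (i + 1) % 4 < 2
    · rw [if_pos h2, Xop_single, if_neg (by omega)]
    · rw [if_neg h2, map_zero]
  · rw [if_neg h1, if_pos (by omega : i % 4 < 2), map_zero, map_zero, Xop_single]
    by_cases h2 : 2 ≤ (i + 1) % 4
    · rw [if_pos h2, Yop_single, if_neg (by omega)]
    · rw [if_neg h2, map_zero]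

lemma Top_step (k : ℕ) :
    (Xop R * Xop R * Yop R * Yop R) (single (4 * k) (1 : R))
      = single (4 * (k + 1)) 1 := by
  simp only [Module.End.mul_apply, Yop_single, Xop_single]
  rw [if_pos (by omega), Yop_single, if_pos (by omega), Xop_single,
    if_pos (by omega), Xop_single, if_pos (by omega)]
  have : 4 * k + 1 + 1 + 1 + 1 = 4 * (k + 1) := by omega
  rw [this]

lemma Top_apply (n k : ℕ) :
    ((Xop R * Xop R * Yop R * Yop R) ^ n) (single (4 * k) (1 : R))
      = single (4 * k + 4 * n) 1 := by
  induction n generalizing k with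
  | zero => simp
  | succ n ih =>
    rw [pow_succ, Module.End.mul_apply, Top_step, ih]
    have : 4 * (k + 1) + 4 * n = 4 * k + 4 * (n + 1) := by omega
    rw [this]

end

noncomputable section

/-- The relations s₁s₂s₁ = s₂s₁s₂, s₁³ = m, s₂³ = m over ℤ (s₁ = ι 0, s₂ = ι 1). -/
inductive Rel15 (m : ℤ) :
    FreeAlgebra ℤ (Fin 2) → FreeAlgebra ℤ (Fin 2) → Prop
  | braid : Rel15 m (FreeAlgebra.ι ℤ 0 * FreeAlgebra.ι ℤ 1 * FreeAlgebra.ι ℤ 0)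
      (FreeAlgebra.ι ℤ 1 * FreeAlgebra.ι ℤ 0 * FreeAlgebra.ι ℤ 1)
  | cube1 : Rel15 m (FreeAlgebra.ι ℤ 0 ^ 3) (algebraMap ℤ (FreeAlgebra ℤ (Fin 2)) m)
  | cube2 : Rel15 m (FreeAlgebra.ι ℤ 1 ^ 3) (algebraMap ℤ (FreeAlgebra ℤ (Fin 2)) m)

/-- for m ∈ ℤ, m ≠ ±1, the ℤ-algebra with generators s₁, s₂ and relations
s₁s₂s₁ = s₂s₁s₂, s₁³ = m, s₂³ = m is not finitely generated as a ℤ-module. -/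
theorem G4_m_hecke_not_finite (m : ℤ) (h1 : m ≠ 1) (h2 : m ≠ -1) :
    ¬ Module.Finite ℤ (RingQuot (Rel15 m)) := by
  intro hF
  -- a prime dividing m
  set p : ℕ := m.natAbs.minFac with hp_def
  have hn1 : m.natAbs ≠ 1 := by
    intro h
    rcases Int.natAbs_eq_iff.mp h with h | h <;> simp_all
  have hp : p.Prime := Nat.minFac_prime hn1
  haveI : Fact p.Prime := ⟨hp⟩
  haveI : NeZero p := ⟨hp.ne_zero⟩
  have hdvd : (p : ℤ) ∣ m := by
    have := Nat.minFac_dvd m.natAbs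
    exact (Int.natCast_dvd_natCast.mpr this).trans (Int.natAbs_dvd.mpr dvd_rfl)
  have hmK : (m : ZMod p) = 0 := (ZMod.intCast_zmod_eq_zero_iff_dvd m p).mpr hdvd
  -- the representation
  let F : FreeAlgebra ℤ (Fin 2) →ₐ[ℤ] Module.End (ZMod p) (ℕ →₀ ZMod p) :=
    FreeAlgebra.lift ℤ (fun i : Fin 2 => if i = 0 then Xop (ZMod p) else Yop (ZMod p))
  have hF0 : F (FreeAlgebra.ι ℤ 0) = Xop (ZMod p) := by simp [F]
  have hF1 : F (FreeAlgebra.ι ℤ 1) = Yop (ZMod p) := by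
    simp only [F, FreeAlgebra.lift_ι_apply]
    rw [if_neg (by decide)]
  have hmE : algebraMap ℤ (Module.End (ZMod p) (ℕ →₀ ZMod p)) m = 0 := by
    have h1 := map_intCast (algebraMap (ZMod p) (Module.End (ZMod p) (ℕ →₀ ZMod p))) m
    show ((m : ℤ) : Module.End (ZMod p) (ℕ →₀ ZMod p)) = 0
    rw [← h1, hmK, map_zero]
  have hrel : ∀ ⦃a b : FreeAlgebra ℤ (Fin 2)⦄, Rel15 m a b → F a = F b := by
    intro a b r
    cases r with
    | braid =>
      simp only [map_mul, hF0, hF1]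
      exact braid_op (ZMod p)
    | cube1 =>
      rw [map_pow, hF0, Xop_cube, AlgHom.commutes, hmE]
    | cube2 =>
      rw [map_pow, hF1, Yop_cube, AlgHom.commutes, hmE]
  let φ : RingQuot (Rel15 m) →ₐ[ℤ] Module.End (ZMod p) (ℕ →₀ ZMod p) := RingQuot.liftAlgHom ℤ ⟨F, hrel⟩
  -- evaluation at e₀
  let L : RingQuot (Rel15 m) →ₗ[ℤ] (ℕ →₀ ZMod p) :=
    AddMonoidHom.toIntLinearMap
      { toFun := fun a => φ a (Finsupp.single 0 1)
        map_zero' := by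
          show φ 0 (Finsupp.single 0 1) = 0
          rw [map_zero]; rfl
        map_add' := by
          intro a b
          show φ (a + b) (Finsupp.single 0 1) = φ a (Finsupp.single 0 1) + φ b (Finsupp.single 0 1)
          rw [map_add]; rfl }
  -- the elements (s₁²s₂²)ⁿ
  have key : ∀ n : ℕ,
      L ((RingQuot.mkAlgHom ℤ (Rel15 m))
        ((FreeAlgebra.ι ℤ 0 * FreeAlgebra.ι ℤ 0 * FreeAlgebra.ι ℤ 1 * FreeAlgebra.ι ℤ 1) ^ n))
        = Finsupp.single (4 * n) (1 : ZMod p) := by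
    intro n
    show φ _ (Finsupp.single 0 1) = _
    rw [RingQuot.liftAlgHom_mkAlgHom_apply]
    rw [map_pow, map_mul, map_mul, map_mul, hF0, hF1]
    have := Top_apply (ZMod p) n 0
    simpa using this
  -- finite generation gives a contradiction
  obtain ⟨s, hs⟩ := hF.fg_top
  have hmem : ∀ n : ℕ, Finsupp.single (4 * n) (1 : ZMod p) ∈
      Submodule.span (ZMod p) (L '' (s : Set (RingQuot (Rel15 m)))) := by
    intro n
    rw [← key n]
    have h1 : ((RingQuot.mkAlgHom ℤ (Rel15 m))
        ((FreeAlgebra.ι ℤ 0 * FreeAlgebra.ι ℤ 0 * FreeAlgebra.ι ℤ 1 * FreeAlgebra.ι ℤ 1) ^ n))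
        ∈ Submodule.span ℤ (s : Set (RingQuot (Rel15 m))) := hs ▸ Submodule.mem_top
    have h2 : L _ ∈ Submodule.map L (Submodule.span ℤ (s : Set (RingQuot (Rel15 m)))) :=
      Submodule.mem_map_of_mem h1
    rw [Submodule.map_span] at h2
    exact Submodule.span_le_restrictScalars ℤ (ZMod p) _ h2
  haveI : Module.Finite (ZMod p) (Submodule.span (ZMod p) (L '' (s : Set (RingQuot (Rel15 m))))) :=
    Module.Finite.span_of_finite (ZMod p) (s.finite_toSet.image L)
  haveI : Finite (Submodule.span (ZMod p) (L '' (s : Set (RingQuot (Rel15 m))))) :=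
    Module.finite_of_finite (ZMod p)
  have hinj : Function.Injective
      (fun n : ℕ => (⟨Finsupp.single (4 * n) (1 : ZMod p), hmem n⟩ :
        Submodule.span (ZMod p) (L '' (s : Set (RingQuot (Rel15 m)))))) := by
    intro a b hab
    have : Finsupp.single (4 * a) (1 : ZMod p) = Finsupp.single (4 * b) (1 : ZMod p) := by
      simpa using hab
    have := Finsupp.single_left_injective (one_ne_zero (α := ZMod p)) this
    omega
  haveI := Finite.of_injective _ hinj
  exact not_finite ℕ

end
end

section
/- Let k be a nontrivial commutative unital ring. (1) The unital associative k-algebra presented by generators A, B, C and relations ABCA = BCAB = CABC, A² = 0, B² = 0, C² = 0 is not finitely generated as a k-module. (2) The same holds for the unital associative k-algebra presented by generators A, B, C and relations ABCA = BCAB = CABC, A² = A, B² = B, C² = C. -/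
noncomputable section

/-- The relations ABCA = BCAB = CABC, A² = B² = C² = 0 (A = ι 0, B = ι 1, C = ι 2). -/
inductive Rel17a (k : Type*) [CommRing k] :
    FreeAlgebra k (Fin 3) → FreeAlgebra k (Fin 3) → Prop
  | braid1 : Rel17a k
      (FreeAlgebra.ι k 0 * FreeAlgebra.ι k 1 * FreeAlgebra.ι k 2 * FreeAlgebra.ι k 0)
      (FreeAlgebra.ι k 1 * FreeAlgebra.ι k 2 * FreeAlgebra.ι k 0 * FreeAlgebra.ι k 1)
  | braid2 : Rel17a k
      (FreeAlgebra.ι k 1 * FreeAlgebra.ι k 2 * FreeAlgebra.ι k 0 * FreeAlgebra.ι k 1)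
      (FreeAlgebra.ι k 2 * FreeAlgebra.ι k 0 * FreeAlgebra.ι k 1 * FreeAlgebra.ι k 2)
  | sq1 : Rel17a k (FreeAlgebra.ι k 0 ^ 2) 0
  | sq2 : Rel17a k (FreeAlgebra.ι k 1 ^ 2) 0
  | sq3 : Rel17a k (FreeAlgebra.ι k 2 ^ 2) 0

/-- The relations ABCA = BCAB = CABC, A² = A, B² = B, C² = C. -/
inductive Rel17b (k : Type*) [CommRing k] :
    FreeAlgebra k (Fin 3) → FreeAlgebra k (Fin 3) → Prop
  | braid1 : Rel17b k
      (FreeAlgebra.ι k 0 * FreeAlgebra.ι k 1 * FreeAlgebra.ι k 2 * FreeAlgebra.ι k 0)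
      (FreeAlgebra.ι k 1 * FreeAlgebra.ι k 2 * FreeAlgebra.ι k 0 * FreeAlgebra.ι k 1)
  | braid2 : Rel17b k
      (FreeAlgebra.ι k 1 * FreeAlgebra.ι k 2 * FreeAlgebra.ι k 0 * FreeAlgebra.ι k 1)
      (FreeAlgebra.ι k 2 * FreeAlgebra.ι k 0 * FreeAlgebra.ι k 1 * FreeAlgebra.ι k 2)
  | sq1 : Rel17b k (FreeAlgebra.ι k 0 ^ 2) (FreeAlgebra.ι k 0)
  | sq2 : Rel17b k (FreeAlgebra.ι k 1 ^ 2) (FreeAlgebra.ι k 1)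
  | sq3 : Rel17b k (FreeAlgebra.ι k 2 ^ 2) (FreeAlgebra.ι k 2)

open Polynomial

/-- The (0,0) entry of `M ^ n` is `X ^ n`, when the first column of `M` is `(X, 0)`. -/
lemma G12aux_pow_entry {k : Type*} [CommRing k] (M : Matrix (Fin 2) (Fin 2) k[X])
    (h00 : M 0 0 = X) (h10 : M 1 0 = 0) :
    ∀ n : ℕ, (M ^ n) 0 0 = X ^ n := by
  intro n
  induction n with
  | zero => simp [Matrix.one_apply]
  | succ n ih =>
    rw [pow_succ, pow_succ, Matrix.mul_apply, Fin.sum_univ_two, ih, h00, h10]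
    ring

lemma G12aux_aeval_entry {k : Type*} [CommRing k] (M : Matrix (Fin 2) (Fin 2) k[X])
    (h00 : M 0 0 = X) (h10 : M 1 0 = 0) (p : k[X]) : (aeval M p) 0 0 = p := by
  induction p using Polynomial.induction_on' with
  | add p q hp hq => simp [map_add, Matrix.add_apply, hp, hq]
  | monomial n a =>
    rw [aeval_monomial, Matrix.mul_apply, Fin.sum_univ_two, G12aux_pow_entry M h00 h10]
    have h1 : (algebraMap k (Matrix (Fin 2) (Fin 2) k[X]) a) 0 0 = C a := by
      simp [Matrix.algebraMap_matrix_apply, algebraMap_eq]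
    have h2 : (algebraMap k (Matrix (Fin 2) (Fin 2) k[X]) a) 0 1 = 0 := by
      simp [Matrix.algebraMap_matrix_apply]
    rw [h1, h2, zero_mul, add_zero, C_mul_X_pow_eq_monomial]

/-- If a presented algebra has a 2×2 matrix representation over `k[X]` in which the
first column of the image of `AB` is `(X, 0)`, then it is not module-finite. -/
lemma G12aux_not_finite_of_rep {k : Type*} [CommRing k]
    {Rel : FreeAlgebra k (Fin 3) → FreeAlgebra k (Fin 3) → Prop}
    [Nontrivial k]
    (f : Fin 3 → Matrix (Fin 2) (Fin 2) k[X])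
    (hrel : ∀ ⦃x y⦄, Rel x y → FreeAlgebra.lift k f x = FreeAlgebra.lift k f y)
    (h00 : (f 0 * f 1) 0 0 = X) (h10 : (f 0 * f 1) 1 0 = 0) :
    ¬ Module.Finite k (RingQuot Rel) := by
  intro hfin
  let φ : RingQuot Rel →ₐ[k] Matrix (Fin 2) (Fin 2) k[X] :=
    RingQuot.liftAlgHom k ⟨FreeAlgebra.lift k f, hrel⟩
  let e : Matrix (Fin 2) (Fin 2) k[X] →ₗ[k] k[X] :=
    { toFun := fun m => m 0 0
      map_add' := fun m n => rfl
      map_smul' := fun c m => rfl }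
  have hφab : φ (RingQuot.mkAlgHom k Rel (FreeAlgebra.ι k 0 * FreeAlgebra.ι k 1)) = f 0 * f 1 := by
    simp only [φ, RingQuot.liftAlgHom_mkAlgHom_apply, map_mul, FreeAlgebra.lift_ι_apply]
  have hsurj : Function.Surjective (e.comp φ.toLinearMap) := by
    intro p
    refine ⟨aeval (R := k) (RingQuot.mkAlgHom k Rel (FreeAlgebra.ι k 0 * FreeAlgebra.ι k 1)) p, ?_⟩
    have h : φ (aeval (R := k) (RingQuot.mkAlgHom k Rel (FreeAlgebra.ι k 0 * FreeAlgebra.ι k 1)) p)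
        = aeval (f 0 * f 1) p := by
      rw [← aeval_algHom_apply, hφab]
    show (φ (aeval (R := k) (RingQuot.mkAlgHom k Rel
        (FreeAlgebra.ι k 0 * FreeAlgebra.ι k 1)) p)) 0 0 = p
    rw [h]
    exact G12aux_aeval_entry (f 0 * f 1) h00 h10 p
  exact Polynomial.not_finite (Module.Finite.of_surjective (e.comp φ.toLinearMap) hsurj)

/-- for any nontrivial commutative ring k, the k-algebras with generators A, B, C
and relations ABCA = BCAB = CABC together with A² = B² = C² = 0 (resp. A² = A, B² = B, C² = C)
are not finitely generated as k-modules. -/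
theorem G12_zero_hecke_not_finite (k : Type*) [CommRing k] [Nontrivial k] :
    ¬ Module.Finite k (RingQuot (Rel17a k)) ∧ ¬ Module.Finite k (RingQuot (Rel17b k)) := by
  constructor
  · refine G12aux_not_finite_of_rep ![!![0, 1; 0, 0], !![0, 0; X, 0], 0] ?_ ?_ ?_
    · rintro x y (h | h | h | h | h) <;>
        · simp only [map_mul, map_pow, map_zero, FreeAlgebra.lift_ι_apply]
          ext i j
          fin_cases i <;> fin_cases j <;>
            simp [Matrix.mul_apply, Fin.sum_univ_two, pow_two]
    · simp [Matrix.mul_apply, Fin.sum_univ_two]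
    · simp [Matrix.mul_apply, Fin.sum_univ_two]
  · refine G12aux_not_finite_of_rep ![!![1, 1; 0, 0], !![0, 0; X, 1], 0] ?_ ?_ ?_
    · rintro x y (h | h | h | h | h) <;>
        · simp only [map_mul, map_pow, map_zero, FreeAlgebra.lift_ι_apply]
          ext i j
          fin_cases i <;> fin_cases j <;>
            simp [Matrix.mul_apply, Fin.sum_univ_two, pow_two]
    · simp [Matrix.mul_apply, Fin.sum_univ_two]
    · simp [Matrix.mul_apply, Fin.sum_univ_two]
end
end

section
/- Let k be a nontrivial commutative unital ring. The unital associative k-algebra presented by generators t, s and relations stst = tsts, t³ = 0, s² = s is not finitely generated as a k-module. -/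
noncomputable section

/-- The relations stst = tsts, t³ = 0, s² = s (t = ι 0, s = ι 1). -/
inductive Rel18 (k : Type*) [CommRing k] :
    FreeAlgebra k (Fin 2) → FreeAlgebra k (Fin 2) → Prop
  | braid : Rel18 k
      (FreeAlgebra.ι k 1 * FreeAlgebra.ι k 0 * FreeAlgebra.ι k 1 * FreeAlgebra.ι k 0)
      (FreeAlgebra.ι k 0 * FreeAlgebra.ι k 1 * FreeAlgebra.ι k 0 * FreeAlgebra.ι k 1)
  | tcube : Rel18 k (FreeAlgebra.ι k 0 ^ 3) 0
  | ssq : Rel18 k (FreeAlgebra.ι k 1 ^ 2) (FreeAlgebra.ι k 1)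

namespace Rel18Aux

open Polynomial Matrix

variable (k : Type*) [CommRing k]

/-- The image of t. -/
def Tm : Matrix (Fin 3) (Fin 3) k[X] := !![0, X, 0; 0, 0, 1; 0, 0, 0]
/-- The image of s. -/
def Sm : Matrix (Fin 3) (Fin 3) k[X] := !![1, 0, 0; 0, 0, 0; 1, 0, 0]

lemma Sm_sq : Sm k * Sm k = Sm k := by
  ext i j; fin_cases i <;> fin_cases j <;>
    simp [Sm, Matrix.mul_apply, Fin.sum_univ_succ, Matrix.vecHead, Matrix.vecTail]

lemma Tm_cube : Tm k * Tm k * Tm k = 0 := by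
  ext i j; fin_cases i <;> fin_cases j <;>
    simp [Tm, Matrix.mul_apply, Fin.sum_univ_succ, Matrix.vecHead, Matrix.vecTail]

lemma braid : Sm k * Tm k * Sm k * Tm k = Tm k * Sm k * Tm k * Sm k := by
  ext i j; fin_cases i <;> fin_cases j <;>
    simp [Sm, Tm, Matrix.mul_apply, Fin.sum_univ_succ, Matrix.vecHead, Matrix.vecTail]

lemma pow_TTS (n : ℕ) :
    (Tm k * Tm k * Sm k) ^ (n + 1) = !![X ^ (n + 1), 0, 0; 0, 0, 0; 0, 0, 0] := by
  induction n with
  | zero =>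
    ext i j; fin_cases i <;> fin_cases j <;>
      simp [Sm, Tm, Matrix.mul_apply, Fin.sum_univ_succ, Matrix.vecHead, Matrix.vecTail]
  | succ n ih =>
    rw [pow_succ, ih]
    ext i j; fin_cases i <;> fin_cases j <;>
      simp [Sm, Tm, Matrix.mul_apply, Fin.sum_univ_succ, Matrix.vecHead, Matrix.vecTail,
        pow_succ]

/-- The representation of the free algebra. -/
def φ : FreeAlgebra k (Fin 2) →ₐ[k] Matrix (Fin 3) (Fin 3) k[X] :=
  FreeAlgebra.lift k ![Tm k, Sm k]

lemma φ_rel : ∀ ⦃x y⦄, Rel18 k x y → φ k x = φ k y := by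
  intro x y h
  cases h with
  | braid =>
      simp only [_root_.map_mul, φ, Matrix.cons_val_zero, Matrix.cons_val_one, Matrix.head_cons, FreeAlgebra.lift_ι_apply]
      exact braid k
  | tcube =>
      simp only [map_pow, map_zero, φ, Matrix.cons_val_zero, FreeAlgebra.lift_ι_apply]
      show (Tm k) ^ 3 = 0
      rw [pow_succ, pow_two]; exact Tm_cube k
  | ssq =>
      simp only [map_pow, φ, Matrix.cons_val_one, Matrix.head_cons, FreeAlgebra.lift_ι_apply]
      show (Sm k) ^ 2 = Sm k
      rw [pow_two]; exact Sm_sq k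

/-- The induced representation of the quotient. -/
def Φ : RingQuot (Rel18 k) →ₐ[k] Matrix (Fin 3) (Fin 3) k[X] :=
  RingQuot.liftAlgHom k ⟨φ k, φ_rel k⟩

/-- The (0,0) matrix entry as a k-linear map. -/
def e00 : Matrix (Fin 3) (Fin 3) k[X] →ₗ[k] k[X] where
  toFun M := M 0 0
  map_add' _ _ := rfl
  map_smul' _ _ := rfl

/-- Evaluation at the (0,0) entry composed with the representation. -/
def ψ : RingQuot (Rel18 k) →ₗ[k] k[X] := (e00 k).comp (Φ k).toLinearMap

lemma pow_mem (n : ℕ) : (X : k[X]) ^ n ∈ LinearMap.range (ψ k) := by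
  cases n with
  | zero =>
      exact ⟨1, by simp [ψ, e00, Matrix.one_apply]; exact Matrix.one_apply_eq (0 : Fin 3)⟩
  | succ n =>
      refine ⟨RingQuot.mkAlgHom k (Rel18 k)
        ((FreeAlgebra.ι k 0 * FreeAlgebra.ι k 0 * FreeAlgebra.ι k 1) ^ (n + 1)), ?_⟩
      have h1 : (Φ k) ((RingQuot.mkAlgHom k (Rel18 k))
          ((FreeAlgebra.ι k 0 * FreeAlgebra.ι k 0 * FreeAlgebra.ι k 1) ^ (n + 1))) =
          (Tm k * Tm k * Sm k) ^ (n + 1) := by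
        rw [Φ, RingQuot.liftAlgHom_mkAlgHom_apply]
        simp [φ, FreeAlgebra.lift_ι_apply]
      show e00 k ((Φ k) _) = _
      rw [h1, pow_TTS]
      simp [e00]
      rfl

lemma ψ_surj : Function.Surjective (ψ k) := by
  intro p
  induction p using Polynomial.induction_on' with
  | add p q hp hq =>
      obtain ⟨a, ha⟩ := hp
      obtain ⟨b, hb⟩ := hq
      exact ⟨a + b, by rw [map_add, ha, hb]⟩
  | monomial n c =>
      obtain ⟨a, ha⟩ := pow_mem k n
      refine ⟨c • a, ?_⟩
      rw [_root_.map_smul, ha, Polynomial.smul_eq_C_mul, Polynomial.C_mul_X_pow_eq_monomial]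

end Rel18Aux

/-- for any nontrivial commutative ring k, the k-algebra with generators t, s and
relations stst = tsts, t³ = 0, s² = s is not finitely generated as a k-module. -/
theorem G312_degenerate_hecke_not_finite (k : Type*) [CommRing k] [Nontrivial k] :
    ¬ Module.Finite k (RingQuot (Rel18 k)) := by
  intro hfin
  have : Module.Finite k (Polynomial k) :=
    Module.Finite.of_surjective (Rel18Aux.ψ k) (Rel18Aux.ψ_surj k)
  exact Polynomial.not_finite this
end
end

section
/- Let d ≥ 3 be an integer and let P = ℤ[a₀, a₁, …, a_{d−1}, α, β] be a polynomial ring over ℤ. The unital associative P-algebra presented by generators t, s and relations stst = tsts, t^d = a_{d−1}·t^{d−1} + … + a₁·t + a₀, s² = α·s + β is not finitely generated as a P-module. -/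
noncomputable section

open MvPolynomial

/-- The parameter ring P = ℤ[a₀, …, a_{d−1}, α, β], with aᵢ = X i (i < d), α = X d, β = X (d+1). -/
abbrev P19 (d : ℕ) : Type := MvPolynomial (Fin (d + 2)) ℤ

/-- The relations stst = tsts, t^d = a_{d−1}·t^{d−1} + … + a₁·t + a₀, s² = α·s + β
(t = ι 0, s = ι 1). -/
inductive Rel19 (d : ℕ) :
    FreeAlgebra (P19 d) (Fin 2) → FreeAlgebra (P19 d) (Fin 2) → Prop
  | braid : Rel19 d
      (FreeAlgebra.ι (P19 d) 1 * FreeAlgebra.ι (P19 d) 0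
        * FreeAlgebra.ι (P19 d) 1 * FreeAlgebra.ι (P19 d) 0)
      (FreeAlgebra.ι (P19 d) 0 * FreeAlgebra.ι (P19 d) 1
        * FreeAlgebra.ι (P19 d) 0 * FreeAlgebra.ι (P19 d) 1)
  | tpow : Rel19 d (FreeAlgebra.ι (P19 d) 0 ^ d)
      (∑ i : Fin d, algebraMap (P19 d) _ (X (Fin.castLE (by omega) i))
        * FreeAlgebra.ι (P19 d) 0 ^ (i : ℕ))
  | ssq : Rel19 d (FreeAlgebra.ι (P19 d) 1 ^ 2)
      (algebraMap (P19 d) _ (X ⟨d, by omega⟩) * FreeAlgebra.ι (P19 d) 1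
        + algebraMap (P19 d) _ (X ⟨d + 1, by omega⟩))

namespace AK19

def Tmap : (ℕ →₀ ℤ) →ₗ[ℤ] (ℕ →₀ ℤ) :=
  Finsupp.lsum ℤ fun m => if m % 3 = 2 then 0 else Finsupp.lsingle (m + 1)

def Smap : (ℕ →₀ ℤ) →ₗ[ℤ] (ℕ →₀ ℤ) :=
  Finsupp.lsum ℤ fun m => if m % 3 = 2 then Finsupp.lsingle (m + 1) else 0

lemma Tmap_single (m : ℕ) (b : ℤ) :
    Tmap (Finsupp.single m b) = if m % 3 = 2 then 0 else Finsupp.single (m + 1) b := by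
  rw [Tmap, Finsupp.lsum_single]
  split_ifs <;> simp

lemma Smap_single (m : ℕ) (b : ℤ) :
    Smap (Finsupp.single m b) = if m % 3 = 2 then Finsupp.single (m + 1) b else 0 := by
  rw [Smap, Finsupp.lsum_single]
  split_ifs <;> simp

lemma hSS : Smap * Smap = 0 := by
  refine Finsupp.lhom_ext fun m b => ?_
  rcases (show m % 3 = 0 ∨ m % 3 = 1 ∨ m % 3 = 2 by omega) with h | h | h <;>
    simp [Module.End.mul_apply, Smap_single, h, Nat.add_mod, show (m+1) % 3 = (m%3+1)%3 from by omega]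

lemma hSTST : Smap * Tmap * Smap * Tmap = 0 := by
  refine Finsupp.lhom_ext fun m b => ?_
  rcases (show m % 3 = 0 ∨ m % 3 = 1 ∨ m % 3 = 2 by omega) with h | h | h <;>
  · have h1 : (m+1) % 3 = (m%3+1) % 3 := by omega
    have h2 : (m+1+1) % 3 = (m%3+2) % 3 := by omega
    have h3 : (m+1+1+1) % 3 = m % 3 % 3 := by omega
    simp [Module.End.mul_apply, Smap_single, Tmap_single, h, h1, h2, h3]

lemma hTSTS : Tmap * Smap * Tmap * Smap = 0 := by
  refine Finsupp.lhom_ext fun m b => ?_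
  rcases (show m % 3 = 0 ∨ m % 3 = 1 ∨ m % 3 = 2 by omega) with h | h | h <;>
  · have h1 : (m+1) % 3 = (m%3+1) % 3 := by omega
    have h2 : (m+1+1) % 3 = (m%3+2) % 3 := by omega
    have h3 : (m+1+1+1) % 3 = m % 3 % 3 := by omega
    simp [Module.End.mul_apply, Smap_single, Tmap_single, h, h1, h2, h3]

lemma hT3 : Tmap ^ 3 = 0 := by
  have : Tmap * Tmap * Tmap = 0 := by
    refine Finsupp.lhom_ext fun m b => ?_
    rcases (show m % 3 = 0 ∨ m % 3 = 1 ∨ m % 3 = 2 by omega) with h | h | h <;>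
    · have h1 : (m+1) % 3 = (m%3+1) % 3 := by omega
      have h2 : (m+1+1) % 3 = (m%3+2) % 3 := by omega
      have h3 : (m+1+1+1) % 3 = m % 3 % 3 := by omega
      simp [Module.End.mul_apply, Tmap_single, h, h1, h2, h3]
  calc Tmap ^ 3 = Tmap * Tmap * Tmap := by rw [pow_succ, pow_two]
    _ = 0 := this

lemma hTd (d : ℕ) (hd : 3 ≤ d) : Tmap ^ d = 0 := by
  have : Tmap ^ d = Tmap ^ (d - 3) * Tmap ^ 3 := by rw [← pow_add]; congr 1; omega
  rw [this, hT3, mul_zero]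


abbrev A : Type := Module.End ℤ (ℕ →₀ ℤ)

end AK19

/-- for d ≥ 3, the P-algebra with generators t, s and relations stst = tsts,
t^d = a_{d−1}·t^{d−1} + … + a₁·t + a₀, s² = α·s + β (β not inverted) is not finitely
generated as a P-module. -/
theorem ariki_koike_no_beta_inverse_not_finite (d : ℕ) (hd : 3 ≤ d) :
    ¬ Module.Finite (P19 d) (RingQuot (Rel19 d)) := by
  intro hfin
  let A := AK19.A
  let φ : P19 d →+* ℤ := (MvPolynomial.aeval (fun _ : Fin (d + 2) => (0 : ℤ))).toRingHom
  letI : Algebra (P19 d) A := RingHom.toAlgebra' ((algebraMap ℤ A).comp φ) (fun c x => Algebra.commutes (φ c) x)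
  let f : FreeAlgebra (P19 d) (Fin 2) →ₐ[P19 d] A :=
    FreeAlgebra.lift _ (fun i : Fin 2 => if i = 0 then AK19.Tmap else AK19.Smap)
  have hT : f (FreeAlgebra.ι _ 0) = AK19.Tmap := by simp [f]
  have hS : f (FreeAlgebra.ι _ 1) = AK19.Smap := by simp [f]
  have hX : ∀ j : Fin (d + 2), f (algebraMap (P19 d) _ (X j)) = 0 := by
    intro j
    rw [AlgHom.commutes]
    show ((algebraMap ℤ A).comp φ) (X j) = 0
    simp [φ]
  have hrel : ∀ ⦃x y⦄, Rel19 d x y → f x = f y := by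
    intro x y h
    cases h with
    | braid =>
        simp only [map_mul, hT, hS]
        rw [AK19.hSTST, AK19.hTSTS]
    | tpow =>
        rw [map_pow, hT, AK19.hTd d hd, map_sum]
        refine (Finset.sum_eq_zero fun i _ => ?_).symm
        rw [map_mul, hX, zero_mul]
    | ssq =>
        rw [map_pow, hS, map_add, map_mul, hX, hX, zero_mul, zero_add, pow_two, AK19.hSS]
  let ψ : RingQuot (Rel19 d) →ₐ[P19 d] A := RingQuot.liftAlgHom (P19 d) ⟨f, hrel⟩
  let e : RingQuot (Rel19 d) → (ℕ →₀ ℤ) := fun q => ψ q (Finsupp.single 0 1)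
  have hsmul : ∀ (p : P19 d) (q : RingQuot (Rel19 d)), e (p • q) = φ p • e q := by
    intro p q
    show ψ (p • q) (Finsupp.single 0 1) = φ p • ψ q (Finsupp.single 0 1)
    rw [map_smul]
    show (algebraMap (P19 d) A p * ψ q) (Finsupp.single 0 1) = _
    show ((algebraMap ℤ A) (φ p) * ψ q) (Finsupp.single 0 1) = _
    rw [Module.End.mul_apply, Module.algebraMap_end_apply]
  have reach : ∀ m : ℕ, ∃ q, e q = Finsupp.single m 1 := by
    intro m
    induction m with
    | zero => exact ⟨1, by show ψ 1 _ = _; rw [map_one]; rfl⟩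
    | succ m ih =>
        obtain ⟨q, hq⟩ := ih
        by_cases h : m % 3 = 2
        · refine ⟨RingQuot.mkAlgHom (P19 d) (Rel19 d) (FreeAlgebra.ι _ 1) * q, ?_⟩
          show ψ _ (Finsupp.single 0 1) = _
          rw [map_mul, Module.End.mul_apply]
          show ψ (RingQuot.mkAlgHom (P19 d) (Rel19 d) (FreeAlgebra.ι _ 1)) (e q) = _
          rw [hq, RingQuot.liftAlgHom_mkAlgHom_apply, hS, AK19.Smap_single, if_pos h]
        · refine ⟨RingQuot.mkAlgHom (P19 d) (Rel19 d) (FreeAlgebra.ι _ 0) * q, ?_⟩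
          show ψ _ (Finsupp.single 0 1) = _
          rw [map_mul, Module.End.mul_apply]
          show ψ (RingQuot.mkAlgHom (P19 d) (Rel19 d) (FreeAlgebra.ι _ 0)) (e q) = _
          rw [hq, RingQuot.liftAlgHom_mkAlgHom_apply, hT, AK19.Tmap_single, if_neg h]
  obtain ⟨Sfin, hspan⟩ := hfin.fg_top
  set B : Finset ℕ := Sfin.sup fun q => (e q).support with hB
  let N : Submodule (P19 d) (RingQuot (Rel19 d)) :=
    { carrier := {q | (e q).support ⊆ B}
      zero_mem' := by
        have : e 0 = 0 := by show ψ 0 _ = 0; rw [map_zero]; rfl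
        simp [Set.mem_setOf_eq, this]
      add_mem' := by
        intro x y hx hy
        have hxy : e (x + y) = e x + e y := by
          show ψ (x + y) _ = _; rw [map_add]; rfl
        show (e (x + y)).support ⊆ B
        rw [hxy]
        exact (Finsupp.support_add).trans (Finset.union_subset hx hy)
      smul_mem' := by
        intro p x hx
        show (e (p • x)).support ⊆ B
        rw [hsmul]
        exact (Finsupp.support_smul).trans hx }
  have hsupp : ∀ q : RingQuot (Rel19 d), (e q).support ⊆ B := by
    intro q
    have hle : Submodule.span (P19 d) (Sfin : Set (RingQuot (Rel19 d))) ≤ N :=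
      Submodule.span_le.mpr fun x hx => show (e x).support ≤ B from Finset.le_sup (f := fun q => (e q).support) hx
    exact hle (by rw [hspan]; trivial)
  obtain ⟨q, hq⟩ := reach (B.sup id + 1)
  have hmem : (B.sup id + 1) ∈ B := by
    apply hsupp q
    rw [hq, Finsupp.support_single_ne_zero _ one_ne_zero]
    simp
  have := Finset.le_sup (f := id) hmem
  simp only [id] at this
  omega
end
end
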